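/- Let G = (V,E) be a graph with maximum degree Δ, and suppose that for some α ≤ 1/2 and β < 1/2, every set S ⊆ V with |S| ≤ α·|V| satisfies |N(S)| ≥ (1−β)·Δ·|S|. Then for any two disjoint subsets S, S' ⊆ V with |S| ≤ α·|V|/2 and |S'| ≥ |S|, the number of vertices v ∈ S' with |N(v) ∩ N(S)| > 2βΔ is at most |S|. -/
import Mathlib


/-- The neighborhood `N(S)` of a set of vertices. -/
def nbhd {V : Type*} [Fintype V] [DecidableEq V] (G : SimpleGraph V)
    [DecidableRel G.Adj] (S : Finset V) : Finset V :=
  S.biUnion fun s => G.neighborFinset s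

/-- Under the expansion hypothesis `|N(S)| ≥ (1−β)Δ|S|` for all sets of
size at most `α·|V|` (with `α ≤ 1/2`, `0 ≤ β < 1/2`), for disjoint `S, S'` with
`|S| ≤ α|V|/2` and `|S'| ≥ |S|`, at most `|S|` vertices `v ∈ S'` satisfy
`|N(v) ∩ N(S)| > 2βΔ`. -/
theorem stmt3 {V : Type*} [Fintype V] [DecidableEq V] (G : SimpleGraph V)
    [DecidableRel G.Adj] (Δ : ℕ) (hΔ : ∀ v, G.degree v ≤ Δ)
    (α β : ℝ) (hα : α ≤ 1 / 2) (hβ0 : 0 ≤ β) (hβ : β < 1 / 2)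
    (hexp : ∀ S : Finset V, (S.card : ℝ) ≤ α * Fintype.card V →
      (1 - β) * Δ * S.card ≤ ((nbhd G S).card : ℝ))
    (S S' : Finset V) (hdisj : Disjoint S S')
    (hScard : (S.card : ℝ) ≤ α * Fintype.card V / 2)
    (hS'card : S.card ≤ S'.card) :
    ((S'.filter fun v =>
        2 * β * Δ < ((G.neighborFinset v ∩ nbhd G S).card : ℝ)).card : ℝ) ≤ S.card := by
  set T0 := S'.filter fun v =>
      2 * β * Δ < ((G.neighborFinset v ∩ nbhd G S).card : ℝ) with hT0def
  by_contra hcon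
  push_neg at hcon
  have hlt : S.card < T0.card := by exact_mod_cast hcon
  -- S is nonempty
  have hSpos : 0 < S.card := by
    rcases Nat.eq_zero_or_pos S.card with h0 | h; swap; · exact h
    exfalso
    have hS : S = ∅ := Finset.card_eq_zero.mp h0
    have hT0e : T0 = ∅ := by
      apply Finset.filter_eq_empty_iff.mpr
      intro v _
      simp [hS, nbhd]
      positivity
    rw [hT0e, Finset.card_empty] at hlt
    omega
  -- Δ ≥ 1
  have hΔpos : (1:ℕ) ≤ Δ := by
    obtain ⟨v, hv⟩ := Finset.card_pos.mp (lt_of_le_of_lt (Nat.zero_le _) hlt)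
    have hv' := (Finset.mem_filter.mp hv).2
    have hne : (G.neighborFinset v ∩ nbhd G S).Nonempty := by
      rw [← Finset.card_pos]
      by_contra h
      push_neg at h
      have h0 : (G.neighborFinset v ∩ nbhd G S).card = 0 := Nat.le_zero.mp h
      rw [h0] at hv'
      push_cast at hv'
      nlinarith [hv', hβ0, Nat.cast_nonneg (α := ℝ) Δ]
    obtain ⟨w, hw⟩ := hne
    have : 0 < G.degree v := by
      rw [← SimpleGraph.card_neighborFinset_eq_degree, Finset.card_pos]
      exact ⟨w, (Finset.mem_inter.mp hw).1⟩
    exact le_trans this (hΔ v)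
  -- pick T ⊆ T0 with |T| = |S|
  obtain ⟨T, hTsub, hTcard⟩ := Finset.exists_subset_card_eq hlt.le
  have hTS' : T ⊆ S' := hTsub.trans (Finset.filter_subset _ _)
  have hdisjT : Disjoint S T := hdisj.mono_right hTS'
  have hcardU : (S ∪ T).card = 2 * S.card := by
    rw [Finset.card_union_of_disjoint hdisjT, hTcard]; omega
  have hexpU := hexp (S ∪ T) (by
    rw [hcardU]
    push_cast
    linarith)
  -- |N(S)| ≤ Δ|S|
  have hNS : ((nbhd G S).card : ℝ) ≤ (Δ : ℝ) * S.card := by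
    have : (nbhd G S).card ≤ Δ * S.card := by
      calc (nbhd G S).card ≤ ∑ v ∈ S, (G.neighborFinset v).card :=
            Finset.card_biUnion_le
        _ ≤ ∑ v ∈ S, Δ := Finset.sum_le_sum (fun v _ => by
            rw [SimpleGraph.card_neighborFinset_eq_degree]; exact hΔ v)
        _ = Δ * S.card := by rw [Finset.sum_const, smul_eq_mul, mul_comm]
    exact_mod_cast this
  -- |N(S∪T)| ≤ |N(S)| + Σ_{v∈T} |N(v) \ N(S)|
  have hsplit : ((nbhd G (S ∪ T)).card : ℝ) ≤ (nbhd G S).card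
      + ∑ v ∈ T, ((G.neighborFinset v \ nbhd G S).card : ℝ) := by
    have h2 : nbhd G (S ∪ T) ⊆ nbhd G S ∪ T.biUnion (fun v => G.neighborFinset v \ nbhd G S) := by
      intro x hx
      obtain ⟨v, hv, hvx⟩ := Finset.mem_biUnion.mp hx
      rcases Finset.mem_union.mp hv with h | h
      · exact Finset.mem_union_left _ (Finset.mem_biUnion.mpr ⟨v, h, hvx⟩)
      · by_cases hxS : x ∈ nbhd G S
        · exact Finset.mem_union_left _ hxS
        · exact Finset.mem_union_right _
            (Finset.mem_biUnion.mpr ⟨v, h, Finset.mem_sdiff.mpr ⟨hvx, hxS⟩⟩)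
    calc ((nbhd G (S ∪ T)).card : ℝ)
        ≤ ((nbhd G S ∪ T.biUnion (fun v => G.neighborFinset v \ nbhd G S)).card : ℝ) := by
          exact_mod_cast Finset.card_le_card h2
      _ ≤ ((nbhd G S).card : ℝ)
          + ((T.biUnion (fun v => G.neighborFinset v \ nbhd G S)).card : ℝ) := by
          exact_mod_cast Finset.card_union_le _ _
      _ ≤ (nbhd G S).card + ∑ v ∈ T, ((G.neighborFinset v \ nbhd G S).card : ℝ) := by
          gcongr
          exact_mod_cast Finset.card_biUnion_le
  -- each term < (1-2β)Δ
  have hterm : ∀ v ∈ T, ((G.neighborFinset v \ nbhd G S).card : ℝ) < (1 - 2*β) * Δ := by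
    intro v hv
    have hv' := (Finset.mem_filter.mp (hTsub hv)).2
    have hdeg : (G.neighborFinset v \ nbhd G S).card
        + (G.neighborFinset v ∩ nbhd G S).card = G.degree v := by
      rw [Finset.card_sdiff_add_card_inter, SimpleGraph.card_neighborFinset_eq_degree]
    have hd : (G.degree v : ℝ) ≤ (Δ : ℝ) := by exact_mod_cast hΔ v
    have : ((G.neighborFinset v \ nbhd G S).card : ℝ)
        + ((G.neighborFinset v ∩ nbhd G S).card : ℝ) = (G.degree v : ℝ) := by
      exact_mod_cast hdeg
    nlinarith
  have hTne : T.Nonempty := Finset.card_pos.mp (hTcard ▸ hSpos)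
  have hsum : ∑ v ∈ T, ((G.neighborFinset v \ nbhd G S).card : ℝ)
      < (1 - 2*β) * Δ * S.card := by
    calc ∑ v ∈ T, ((G.neighborFinset v \ nbhd G S).card : ℝ)
        < ∑ _v ∈ T, (1 - 2*β) * (Δ : ℝ) := Finset.sum_lt_sum_of_nonempty hTne hterm
      _ = (1 - 2*β) * Δ * S.card := by
          rw [Finset.sum_const, nsmul_eq_mul, hTcard]; ring
  -- combine
  have hcast : (((S ∪ T).card : ℕ) : ℝ) = 2 * S.card := by rw [hcardU]; push_cast; ring
  rw [hcast] at hexpU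
  have hSpos' : (0:ℝ) < S.card := by exact_mod_cast hSpos
  have hΔpos' : (1:ℝ) ≤ (Δ:ℝ) := by exact_mod_cast hΔpos
  nlinarith [hexpU, hsplit, hsum, hNS]
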